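/- Let D be a coherent casebase, N_1 a characterisation not in D, o_1 an outcome, and θ = (θ_C, θ_o) ∈ D such that the new-case argument (N_1,?) defends θ in the AF mined from D and N_1. If θ_o ≠ o_1, then (N_1,o_1) attacks θ in the AF mined from D ∪ {(N_1,o_1)} (and any new case). -/

import Mathlib

namespace AACBR

/-- In an AF with arguments `args` and attack `att`, a set `E` defends argument `a`
iff every attacker of `a` (within `args`) is attacked by some element of `E`. -/
def defends {A : Type} (args : Set A) (att : A → A → Prop) (E : Set A) (a : A) : Prop :=
  ∀ b ∈ args, att b a → ∃ c ∈ E, att c b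

/-- `G_0` is the set of unattacked arguments; `G_{i+1}` is the set of arguments
defended by `G_i`. -/
def groundedSeq {A : Type} (args : Set A) (att : A → A → Prop) : ℕ → Set A
  | 0 => {a ∈ args | ∀ b ∈ args, ¬ att b a}
  | n + 1 => {a ∈ args | defends args att (groundedSeq args att n) a}

/-- The grounded extension `⋃ i, G_i`. -/
def grounded {A : Type} (args : Set A) (att : A → A → Prop) : Set A :=
  ⋃ i, groundedSeq args att i

variable {X : Type}

/-- Cases are pairs of a characterisation (in the partially ordered set `X`, where
`α ≤ β` reads "`α` is less specific than `β`") and one of the two outcomes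
(modelled as `Bool`). Attack between labelled cases of the casebase `cb`
(which includes the default argument): `a` attacks `b` iff their outcomes differ,
`a` is at least as specific as `b`, and no case of `cb` with the same outcome as
`a` is strictly in between. -/
def cbAtt [PartialOrder X] (cb : Set (X × Bool)) (a b : X × Bool) : Prop :=
  a ∈ cb ∧ b ∈ cb ∧ a.2 ≠ b.2 ∧ b.1 ≤ a.1 ∧
    ¬ ∃ g ∈ cb, g.2 = a.2 ∧ b.1 < g.1 ∧ g.1 < a.1

/-- The arguments of the AF mined from casebase `D`, default argument `(dC, dO)`
and a new case: `none` is the new-case argument, `some c` the labelled cases. -/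
def minedArgs (D : Set (X × Bool)) (dC : X) (dO : Bool) : Set (Option (X × Bool)) :=
  insert none (Option.some '' insert (dC, dO) D)

/-- The attack relation of the (regular) AF mined from `D`, default `(dC, dO)` and
new case `N`: labelled cases attack each other as in `cbAtt`, and the new-case
argument attacks exactly the labelled cases `b` that are irrelevant to it,
i.e. with `¬ b.1 ≤ N`. -/
def minedAtt [PartialOrder X] (D : Set (X × Bool)) (dC : X) (dO : Bool) (N : X) :
    Option (X × Bool) → Option (X × Bool) → Prop
  | some a, some b => cbAtt (insert (dC, dO) D) a b
  | none, some b => b ∈ insert (dC, dO) D ∧ ¬ b.1 ≤ N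
  | _, none => False

/-- The grounded extension of the AF mined from `D` and new case `N`. -/
def minedGrounded [PartialOrder X] (D : Set (X × Bool)) (dC : X) (dO : Bool) (N : X) :
    Set (Option (X × Bool)) :=
  grounded (minedArgs D dC dO) (minedAtt D dC dO N)

open Classical in
/-- The AA-CBR_⪰ prediction for `N`: the default outcome `dO` if the default
argument is in the grounded extension, and the other outcome otherwise. -/
noncomputable def predict [PartialOrder X] (D : Set (X × Bool)) (dC : X) (dO : Bool)
    (N : X) : Bool :=
  if some (dC, dO) ∈ minedGrounded D dC dO N then dO else !dO

/-- A casebase is coherent if no characterisation occurs with two outcomes. -/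
def coherent (D : Set (X × Bool)) : Prop :=
  ∀ a ∈ D, ∀ b ∈ D, a.1 = b.1 → a.2 = b.2

/-- A case `a ∈ D` is nearest to `N` iff `a.1 ⪯ N`, maximally so. -/
def nearest [PartialOrder X] (D : Set (X × Bool)) (N : X) (a : X × Bool) : Prop :=
  a ∈ D ∧ a.1 ≤ N ∧ ¬ ∃ b ∈ D, a.1 < b.1 ∧ b.1 ≤ N

end AACBR

namespace AACBR

/-- Let `D` be coherent, `N₁` a characterisation not occurring in `D`, `o₁` an
outcome, and `θ ∈ D` a case defended by the new-case argument in the AF mined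
from `D` and `N₁`. If `θ`'s outcome differs from `o₁`, then `(N₁,o₁)` attacks
`θ` in the AF mined from `D ∪ {(N₁,o₁)}` and any new case `N₂`. -/
theorem entering_case_attacks_defended {X : Type} [PartialOrder X]
    (D : Set (X × Bool)) (hfin : D.Finite) (hcoh : coherent D)
    (dC : X) (dO : Bool) (hleast : ∀ x : X, dC ≤ x)
    (N₁ : X) (o₁ : Bool) (hnew : ∀ a ∈ D, a.1 ≠ N₁)
    (θ : X × Bool) (hθ : θ ∈ D)
    (hdef : defends (minedArgs D dC dO) (minedAtt D dC dO N₁) {none} (some θ))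
    (ho : θ.2 ≠ o₁) (N₂ : X) :
    minedAtt (insert (N₁, o₁) D) dC dO N₂ (some (N₁, o₁)) (some θ) := by
  -- θ is relevant to N₁
  have hθle : θ.1 ≤ N₁ := by
    by_contra hnle
    obtain ⟨c, hc, hatt⟩ := hdef none (by simp [minedArgs])
      ⟨Set.mem_insert_of_mem _ hθ, hnle⟩
    rcases hc with rfl
    exact hatt
  refine ⟨Set.mem_insert_of_mem _ (Set.mem_insert _ _),
    Set.mem_insert_of_mem _ (Set.mem_insert_of_mem _ hθ),
    fun h => ho h.symm, hθle, ?_⟩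
  rintro ⟨g, hg, hg2, hg1, hg3⟩
  -- g cannot be the default nor (N₁,o₁), so g ∈ D
  have hgD : g ∈ D := by
    rcases hg with rfl | rfl | hg
    · exact absurd (lt_of_le_of_lt (hleast θ.1) hg1) (lt_irrefl _)
    · exact absurd hg3 (lt_irrefl _)
    · exact hg
  -- the set of same-outcome cases strictly above θ and ≤ N₁ is nonempty and finite
  set S : Set (X × Bool) := {h ∈ insert (dC, dO) D | h.2 = o₁ ∧ θ.1 < h.1 ∧ h.1 ≤ N₁}
    with hS
  have hgS : g ∈ S := ⟨Set.mem_insert_of_mem _ hgD, hg2, hg1, le_of_lt hg3⟩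
  have hSfin : S.Finite := ((hfin.insert (dC, dO)).subset fun h hh => hh.1)
  obtain ⟨η, hηS, hmin⟩ : ∃ η ∈ S, ∀ a' ∈ S, a'.1 ≤ η.1 → η.1 = a'.1 := by
    obtain ⟨η, hηS, hmin⟩ := Set.Finite.exists_minimalFor Prod.fst S hSfin ⟨g, hgS⟩
    exact ⟨η, hηS, fun a' ha' hle => le_antisymm (hmin ha' hle) hle⟩
  obtain ⟨hηcb, hη2, hη1, hηle⟩ := hηS
  -- η attacks θ in the original AF
  have hatt : minedAtt D dC dO N₁ (some η) (some θ) := by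
    refine ⟨hηcb, Set.mem_insert_of_mem _ hθ, by rw [hη2]; exact fun h => ho h.symm,
      le_of_lt hη1, ?_⟩
    rintro ⟨h, hh, hh2, hh1, hh3⟩
    have : h ∈ S := ⟨hh, hh2.trans hη2, hh1, le_of_lt (lt_of_lt_of_le hh3 hηle)⟩
    exact absurd (hmin h this (le_of_lt hh3)) (ne_of_gt hh3)
  obtain ⟨c, hc, hcatt⟩ := hdef (some η)
    (Set.mem_insert_of_mem _ ⟨η, hηcb, rfl⟩) hatt
  rcases hc with rfl
  exact hcatt.2 hηle


end AACBR
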